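/- If L is a finitely presented linear order, then its first Hausdorff derivative L^(1) is finitely presented. -/

import Mathlib

section HausdorffDerivative

variable {M : Type} [LinearOrder M]

/-- `x ∼₁ y` iff the closed interval between `x` and `y` is finite. -/
def sim1 (x y : M) : Prop := (Set.uIcc x y).Finite

theorem sim1_refl (x : M) : sim1 x x := by simp [sim1]

theorem sim1_symm {x y : M} (h : sim1 x y) : sim1 y x := by
  rwa [sim1, Set.uIcc_comm]

theorem sim1_trans {x y z : M} (h1 : sim1 x y) (h2 : sim1 y z) : sim1 x z :=
  Set.Finite.subset (h1.union h2) (Set.uIcc_subset_uIcc_union_uIcc)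

/-- The setoid of `∼₁`-equivalence. -/
def sim1Setoid (M : Type) [LinearOrder M] : Setoid M :=
  ⟨sim1, ⟨sim1_refl, sim1_symm, sim1_trans⟩⟩

/-- The first Hausdorff derivative `M^(1)`: the linear order of `∼₁`-classes. -/
def HDeriv (M : Type) [LinearOrder M] : Type := Quotient (sim1Setoid M)

theorem sim1_le_congr {x x' y y' : M} (hx : sim1 x x') (hy : sim1 y y')
    (h : x ≤ y ∨ sim1 x y) : x' ≤ y' ∨ sim1 x' y' := by
  by_cases hxy' : sim1 x' y'
  · exact Or.inr hxy'
  rcases h with h | h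
  · left
    by_contra hlt
    push_neg at hlt
    apply hxy' (sim1_symm _)
    have hsub : Set.uIcc y' x' ⊆ Set.uIcc y' y ∪ Set.uIcc x x' := by
      intro z hz
      rw [Set.uIcc_of_le hlt.le, Set.mem_Icc] at hz
      rcases le_or_gt z y with hzy | hzy
      · exact Or.inl (Set.mem_uIcc.2 (Or.inl ⟨hz.1, hzy⟩))
      · exact Or.inr (Set.mem_uIcc.2 (Or.inl ⟨(h.trans hzy.le), hz.2⟩))
    exact Set.Finite.subset ((sim1_symm hy).union hx) hsub
  · exact absurd (sim1_trans (sim1_trans (sim1_symm hx) h) hy) hxy'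

/-- The induced order on `∼₁`-classes. -/
def HDeriv.le : HDeriv M → HDeriv M → Prop :=
  Quotient.lift₂ (fun x y => x ≤ y ∨ sim1 x y)
    (fun _ _ _ _ ha hb => propext
      ⟨sim1_le_congr ha hb, sim1_le_congr (sim1_symm ha) (sim1_symm hb)⟩)

noncomputable instance HDeriv.instLinearOrder : LinearOrder (HDeriv M) where
  le := HDeriv.le
  le_refl := by rintro ⟨x⟩; exact Or.inl le_rfl
  le_trans := by
    rintro ⟨x⟩ ⟨y⟩ ⟨z⟩ (h1 | h1) (h2 | h2)
    · exact Or.inl (h1.trans h2)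
    · rcases le_or_gt x z with h | h
      · exact Or.inl h
      · exact Or.inr (sim1_symm (Set.Finite.subset h2
          (by rw [Set.uIcc_of_le h.le, Set.uIcc_of_ge (h.le.trans h1)]
              exact Set.Icc_subset_Icc le_rfl h1)))
    · rcases le_or_gt x z with h | h
      · exact Or.inl h
      · exact Or.inr (Set.Finite.subset h1
          (by rw [Set.uIcc_of_ge h.le, Set.uIcc_of_ge (h2.trans h.le)]
              exact Set.Icc_subset_Icc h2 le_rfl))
    · exact Or.inr (sim1_trans h1 h2)
  le_antisymm := by
    rintro ⟨x⟩ ⟨y⟩ (h1 | h1) (h2 | h2)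
    · exact Quotient.sound (le_antisymm h1 h2 ▸ sim1_refl x)
    · exact Quotient.sound (sim1_symm h2)
    · exact Quotient.sound h1
    · exact Quotient.sound h1
  le_total := by
    rintro ⟨x⟩ ⟨y⟩
    rcases le_total x y with h | h
    · exact Or.inl (Or.inl h)
    · exact Or.inr (Or.inl h)
  toDecidableLE := Classical.decRel _

end HausdorffDerivative
section IterDeriv

/-- Auxiliary: the `n`-th iterated Hausdorff derivative together with its order. -/
noncomputable def IterDerivAux (M : Type) (i : LinearOrder M) : ℕ → (T : Type) × LinearOrder T
  | 0 => ⟨M, i⟩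
  | n + 1 => ⟨@HDeriv (IterDerivAux M i n).1 (IterDerivAux M i n).2,
      @HDeriv.instLinearOrder (IterDerivAux M i n).1 (IterDerivAux M i n).2⟩

/-- The `n`-th iterated Hausdorff derivative `M^(n)`. -/
noncomputable def IterDeriv (M : Type) [i : LinearOrder M] (n : ℕ) : Type :=
  (IterDerivAux M i n).1

noncomputable instance (M : Type) [i : LinearOrder M] (n : ℕ) : LinearOrder (IterDeriv M n) :=
  (IterDerivAux M i n).2

/-- The (finite) Hausdorff rank: the least `n` such that `M^(n)` is finite. -/
noncomputable def hrank (M : Type) [LinearOrder M] : ℕ :=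
  sInf {n : ℕ | Finite (IterDeriv M n)}

end IterDeriv

/-- The class of finitely presented linear orders: the smallest
isomorphism-closed class containing `0` and `1` and closed under binary ordered
sums and the operations `L ↦ ω ×ₗ L` and `L ↦ ω* ×ₗ L`
(here `ℕ ×ₗ A = ∑_{n∈ω} A` and `ℕᵒᵈ ×ₗ A = ∑_{n∈ω*} A`). -/
inductive IsFP : (L : Type) → [_inst : LinearOrder L] → Prop where
  | zero : IsFP (Fin 0)
  | one : IsFP (Fin 1)
  | iso {A B : Type} [LinearOrder A] [LinearOrder B] :
      IsFP A → Nonempty (A ≃o B) → IsFP B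
  | sum {A B : Type} [LinearOrder A] [LinearOrder B] :
      IsFP A → IsFP B → IsFP (A ⊕ₗ B)
  | omega {A : Type} [LinearOrder A] : IsFP A → IsFP (ℕ ×ₗ A)
  | omegaStar {A : Type} [LinearOrder A] : IsFP A → IsFP (ℕᵒᵈ ×ₗ A)


section Basics

open OrderDual

variable {M N : Type} [LinearOrder M] [LinearOrder N]

/-- The class of `x` in the first Hausdorff derivative. -/
def cls (x : M) : HDeriv M := Quotient.mk (sim1Setoid M) x

theorem cls_surjective : Function.Surjective (cls : M → HDeriv M) :=
  fun c => ⟨c.out, Quotient.out_eq c⟩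

theorem cls_out (c : HDeriv M) : cls c.out = c := Quotient.out_eq c

theorem cls_eq_cls {x y : M} : cls x = cls y ↔ sim1 x y :=
  ⟨fun h => Quotient.exact h, fun h => Quotient.sound h⟩

theorem sim1_out (c : HDeriv M) : sim1 c.out c.out := sim1_refl _

theorem sim1_out_of_cls {x : M} {c : HDeriv M} (h : cls x = c) : sim1 c.out x :=
  sim1_symm (cls_eq_cls.mp (h.trans (cls_out c).symm))

theorem cls_le_cls {x y : M} : cls x ≤ cls y ↔ (x ≤ y ∨ sim1 x y) := Iff.rfl

theorem cls_lt_cls {x y : M} : cls x < cls y ↔ (x < y ∧ ¬ sim1 x y) := by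
  rw [lt_iff_le_not_ge, cls_le_cls, cls_le_cls]
  constructor
  · rintro ⟨h1, h2⟩
    push_neg at h2
    obtain ⟨h2a, h2b⟩ := h2
    have hns : ¬ sim1 x y := fun hs => h2b (sim1_symm hs)
    refine ⟨?_, hns⟩
    rcases h1 with h | h
    · exact h2a
    · exact absurd h hns
  · rintro ⟨h1, h2⟩
    refine ⟨Or.inl h1.le, ?_⟩
    rintro (h | h)
    · exact absurd h (not_le_of_gt h1)
    · exact h2 (sim1_symm h)

theorem sim1_of_Ici_finite {x y : M} (hx : (Set.Ici x).Finite) (hy : (Set.Ici y).Finite) :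
    sim1 x y := by
  refine Set.Finite.subset (hx.union hy) ?_
  intro z hz
  rcases le_total x y with h | h
  · rw [Set.uIcc_of_le h] at hz; exact Or.inl hz.1
  · rw [Set.uIcc_of_ge h] at hz; exact Or.inr hz.1

theorem sim1_of_Iic_finite {x y : M} (hx : (Set.Iic x).Finite) (hy : (Set.Iic y).Finite) :
    sim1 x y := by
  refine Set.Finite.subset (hx.union hy) ?_
  intro z hz
  rcases le_total x y with h | h
  · rw [Set.uIcc_of_le h] at hz; exact Or.inr hz.2
  · rw [Set.uIcc_of_ge h] at hz; exact Or.inl hz.2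

theorem Ici_finite_of_sim1 {x y : M} (hy : (Set.Ici y).Finite) (h : sim1 x y) :
    (Set.Ici x).Finite := by
  refine Set.Finite.subset (h.union hy) ?_
  intro z hz
  rcases le_total z y with h1 | h1
  · exact Or.inl (Set.mem_uIcc.2 (Or.inl ⟨hz, h1⟩))
  · exact Or.inr h1

theorem Iic_finite_of_sim1 {x y : M} (hy : (Set.Iic y).Finite) (h : sim1 x y) :
    (Set.Iic x).Finite := by
  refine Set.Finite.subset (h.union hy) ?_
  intro z hz
  rcases le_total z y with h1 | h1
  · exact Or.inr h1
  · exact Or.inl (Set.mem_uIcc.2 (Or.inr ⟨h1, hz⟩))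

theorem sim1_map (e : M ≃o N) {x y : M} (h : sim1 x y) : sim1 (e x) (e y) := by
  refine Set.Finite.subset (h.image e) ?_
  intro z hz
  refine ⟨e.symm z, ?_, e.apply_symm_apply z⟩
  rw [Set.mem_uIcc] at hz ⊢
  rcases hz with ⟨h1, h2⟩ | ⟨h1, h2⟩
  · exact Or.inl ⟨by simpa using e.symm.monotone h1, by simpa using e.symm.monotone h2⟩
  · exact Or.inr ⟨by simpa using e.symm.monotone h1, by simpa using e.symm.monotone h2⟩

theorem sim1_map_iff (e : M ≃o N) {x y : M} : sim1 (e x) (e y) ↔ sim1 x y := by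
  refine ⟨fun h => ?_, sim1_map e⟩
  have := sim1_map e.symm h
  simpa using this

/-- Transfer of the derivative along an order isomorphism. -/
noncomputable def hderivCongr (e : M ≃o N) : HDeriv M ≃o HDeriv N := by
  refine StrictMono.orderIsoOfSurjective (fun c => cls (e c.out)) ?_ ?_
  · intro c c' h
    rw [← cls_out c, ← cls_out c', cls_lt_cls] at h
    rw [cls_lt_cls]
    exact ⟨e.strictMono h.1, fun hs => h.2 ((sim1_map_iff e).mp hs)⟩
  · intro d
    refine ⟨cls (e.symm d.out), ?_⟩
    have h1 : sim1 ((cls (e.symm d.out)).out) (e.symm d.out) := sim1_out_of_cls rfl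
    have h2 : sim1 (e ((cls (e.symm d.out)).out)) d.out := by
      have := sim1_map e h1
      simpa using this
    exact (cls_eq_cls.mpr h2).trans (cls_out d)

/-- Order isomorphism between empty linear orders. -/
noncomputable def isoOfIsEmpty (X Y : Type) [LinearOrder X] [LinearOrder Y]
    [IsEmpty X] [IsEmpty Y] : X ≃o Y :=
  ⟨Equiv.equivOfIsEmpty X Y, fun {a} => isEmptyElim a⟩

/-- Order isomorphism between nonempty subsingleton linear orders. -/
noncomputable def isoOfSubsingleton (X Y : Type) [LinearOrder X] [LinearOrder Y]
    [Subsingleton X] [Nonempty X] [Subsingleton Y] [Nonempty Y] : X ≃o Y :=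
  ⟨equivOfSubsingletonOfSubsingleton (fun _ => Classical.arbitrary Y)
      (fun _ => Classical.arbitrary X),
    by
      intro a b
      constructor
      · intro _; exact le_of_eq (Subsingleton.elim a b)
      · intro _; exact le_of_eq (Subsingleton.elim _ _)⟩

theorem IsFP.ofIso {A B : Type} [LinearOrder A] [LinearOrder B] (e : A ≃o B) (h : IsFP A) :
    IsFP B := IsFP.iso h ⟨e⟩

theorem isFP_of_isEmpty (X : Type) [LinearOrder X] [IsEmpty X] : IsFP X :=
  IsFP.ofIso (isoOfIsEmpty (Fin 0) X) IsFP.zero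

theorem isFP_of_subsingleton (X : Type) [LinearOrder X] [Subsingleton X] [Nonempty X] : IsFP X :=
  IsFP.ofIso (isoOfSubsingleton (Fin 1) X) IsFP.one

end Basics


section Duality

open OrderDual

variable {M N : Type} [LinearOrder M] [LinearOrder N]

/-- Duality anti-distributes over lexicographic products. -/
noncomputable def prodLexDual (α β : Type) [LinearOrder α] [LinearOrder β] :
    (α ×ₗ β)ᵒᵈ ≃o αᵒᵈ ×ₗ βᵒᵈ where
  toFun p := toLex (toDual (ofLex (ofDual p)).1, toDual (ofLex (ofDual p)).2)
  invFun p := toDual (toLex ((ofDual (ofLex p).1), (ofDual (ofLex p).2)))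
  left_inv p := rfl
  right_inv p := rfl
  map_rel_iff' := by
    intro p q
    change toLex (_, _) ≤ toLex (_, _) ↔ _
    rw [Prod.Lex.le_iff]
    change _ ↔ (ofDual q ≤ ofDual p)
    rw [show (ofDual p : α ×ₗ β) = toLex (ofLex (ofDual p)) from rfl,
      show (ofDual q : α ×ₗ β) = toLex (ofLex (ofDual q)) from rfl, Prod.Lex.le_iff]
    simp only [ofLex_toLex, OrderDual.toDual_lt_toDual, OrderDual.toDual_le_toDual, OrderDual.toDual_inj]
    constructor
    · rintro (h | ⟨h1, h2⟩)
      · exact Or.inl h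
      · exact Or.inr ⟨h1.symm, h2⟩
    · rintro (h | ⟨h1, h2⟩)
      · exact Or.inl h
      · exact Or.inr ⟨h1.symm, h2⟩

/-- Congruence of lexicographic products. -/
noncomputable def prodLexCongr {α β γ δ : Type} [LinearOrder α] [LinearOrder β]
    [LinearOrder γ] [LinearOrder δ] (e₁ : α ≃o γ) (e₂ : β ≃o δ) : α ×ₗ β ≃o γ ×ₗ δ where
  toFun p := toLex (e₁ (ofLex p).1, e₂ (ofLex p).2)
  invFun p := toLex (e₁.symm (ofLex p).1, e₂.symm (ofLex p).2)
  left_inv p := by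
    change (toLex (e₁.symm (e₁ (ofLex p).1), e₂.symm (e₂ (ofLex p).2)) : α ×ₗ β) = p
    simp
  right_inv p := by
    change (toLex (e₁ (e₁.symm (ofLex p).1), e₂ (e₂.symm (ofLex p).2)) : γ ×ₗ δ) = p
    simp
  map_rel_iff' := by
    intro p q
    change toLex (_, _) ≤ toLex (_, _) ↔ _
    rw [Prod.Lex.le_iff]
    rw [show (p : α ×ₗ β) = toLex (ofLex p) from rfl,
      show (q : α ×ₗ β) = toLex (ofLex q) from rfl, Prod.Lex.le_iff]
    simp [e₁.lt_iff_lt, e₂.le_iff_le, EmbeddingLike.apply_eq_iff_eq]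

theorem finite_preimage_equiv {α β : Type*} (e : α ≃ β) {s : Set β} :
    (e ⁻¹' s).Finite ↔ s.Finite := by
  constructor
  · intro h
    have := h.image e
    rwa [Set.image_preimage_eq _ e.surjective] at this
  · exact fun h => h.preimage (e.injective.injOn)

theorem sim1_toDual {x y : M} : sim1 (toDual x) (toDual y) ↔ sim1 x y := by
  unfold sim1
  have h : Set.uIcc (toDual x) (toDual y) = (ofDual : Mᵒᵈ ≃ M) ⁻¹' (Set.uIcc x y) := by
    ext z
    simp only [Set.mem_uIcc, Set.mem_preimage]
    constructor
    · rintro (⟨h1, h2⟩ | ⟨h1, h2⟩)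
      · exact Or.inr ⟨h2, h1⟩
      · exact Or.inl ⟨h2, h1⟩
    · rintro (⟨h1, h2⟩ | ⟨h1, h2⟩)
      · exact Or.inr ⟨h2, h1⟩
      · exact Or.inl ⟨h2, h1⟩
  rw [h, finite_preimage_equiv]

/-- The derivative of the dual is the dual of the derivative. -/
noncomputable def hderivDual (M : Type) [LinearOrder M] : HDeriv (Mᵒᵈ) ≃o (HDeriv M)ᵒᵈ := by
  refine StrictMono.orderIsoOfSurjective
    (fun c => toDual (cls (ofDual c.out))) ?_ ?_
  · intro c c' h
    rw [← cls_out c, ← cls_out c', cls_lt_cls] at h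
    obtain ⟨h1, h2⟩ := h
    change cls (ofDual c'.out) < cls (ofDual c.out)
    rw [cls_lt_cls]
    refine ⟨h1, fun hs => h2 ?_⟩
    have := sim1_toDual.mpr hs
    simpa using sim1_symm this
  · intro d
    refine ⟨cls (toDual ((ofDual d).out)), ?_⟩
    have h1 : sim1 ((cls (toDual ((ofDual d).out))).out) (toDual ((ofDual d).out)) :=
      sim1_out_of_cls rfl
    have h2 : sim1 (ofDual ((cls (toDual ((ofDual d).out))).out)) ((ofDual d).out) := by
      rw [← sim1_toDual]; simpa using h1
    change toDual (cls _) = d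
    rw [cls_eq_cls.mpr h2, cls_out]
    rfl

/-- Finitely presented orders are closed under duality. -/
theorem dual_FP {A : Type} [LinearOrder A] (h : IsFP A) : IsFP (Aᵒᵈ) := by
  induction h with
  | zero =>
    haveI : IsEmpty ((Fin 0)ᵒᵈ) := ⟨fun x => Fin.elim0 (ofDual x)⟩
    exact isFP_of_isEmpty _
  | one =>
    haveI : Subsingleton ((Fin 1)ᵒᵈ) :=
      ⟨fun a b => congrArg toDual (Subsingleton.elim (ofDual a) (ofDual b))⟩
    haveI : Nonempty ((Fin 1)ᵒᵈ) := ⟨toDual 0⟩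
    exact isFP_of_subsingleton _
  | @iso A B _ _ _ e ih =>
    obtain ⟨e⟩ := e
    exact IsFP.ofIso e.dual ih
  | @sum A B _ _ _ _ ihA ihB =>
    exact IsFP.ofIso (OrderIso.sumLexDualAntidistrib A B).symm (IsFP.sum ihB ihA)
  | @omega A _ _ ih =>
    exact IsFP.ofIso (prodLexDual ℕ A).symm (IsFP.omegaStar ih)
  | @omegaStar A _ _ ih =>
    refine IsFP.ofIso ((prodLexDual ℕᵒᵈ A).trans
      (prodLexCongr (OrderIso.dualDual ℕ).symm (OrderIso.refl _))).symm ?_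
    exact IsFP.omega ih

theorem IsFP.of_dual {A : Type} [i : LinearOrder A] (h : IsFP (Aᵒᵈ)) : IsFP A :=
  @IsFP.ofIso _ _ (OrderDual.instLinearOrder (Aᵒᵈ)) i (OrderIso.dualDual A).symm (dual_FP h)

end Duality


section SumSim

open OrderDual

variable {A B : Type} [LinearOrder A] [LinearOrder B]

theorem inl_lex_injective : Function.Injective (fun a : A => (toLex (Sum.inl a) : A ⊕ₗ B)) :=
  fun a a' h => Sum.inl_injective (toLex.injective h)

theorem inr_lex_injective : Function.Injective (fun b : B => (toLex (Sum.inr b) : A ⊕ₗ B)) :=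
  fun b b' h => Sum.inr_injective (toLex.injective h)

theorem sim1_inl_iff {a a' : A} :
    sim1 (toLex (Sum.inl a) : A ⊕ₗ B) (toLex (Sum.inl a')) ↔ sim1 a a' := by
  constructor
  · intro h
    rw [sim1, ← Set.finite_image_iff
      ((inl_lex_injective (A := A) (B := B)).injOn)]
    refine h.subset ?_
    rintro z ⟨c, hc, rfl⟩
    rw [Set.mem_uIcc] at hc ⊢
    rcases hc with ⟨h1, h2⟩ | ⟨h1, h2⟩
    · exact Or.inl ⟨Sum.Lex.inl_le_inl_iff.mpr h1, Sum.Lex.inl_le_inl_iff.mpr h2⟩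
    · exact Or.inr ⟨Sum.Lex.inl_le_inl_iff.mpr h1, Sum.Lex.inl_le_inl_iff.mpr h2⟩
  · intro h
    refine (h.image (fun c => (toLex (Sum.inl c) : A ⊕ₗ B))).subset ?_
    intro z hz
    obtain (c | b) := z
    · refine ⟨c, ?_, rfl⟩
      change (toLex (Sum.inl c) : A ⊕ₗ B) ∈ _ at hz
      rw [Set.mem_uIcc] at hz ⊢
      rcases hz with ⟨h1, h2⟩ | ⟨h1, h2⟩
      · exact Or.inl ⟨Sum.Lex.inl_le_inl_iff.mp h1, Sum.Lex.inl_le_inl_iff.mp h2⟩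
      · exact Or.inr ⟨Sum.Lex.inl_le_inl_iff.mp h1, Sum.Lex.inl_le_inl_iff.mp h2⟩
    · change (toLex (Sum.inr b) : A ⊕ₗ B) ∈ _ at hz
      rw [Set.mem_uIcc] at hz
      rcases hz with ⟨h1, h2⟩ | ⟨h1, h2⟩
      · exact absurd h2 Sum.Lex.not_inr_le_inl
      · exact absurd h2 Sum.Lex.not_inr_le_inl

theorem sim1_inr_iff {b b' : B} :
    sim1 (toLex (Sum.inr b) : A ⊕ₗ B) (toLex (Sum.inr b')) ↔ sim1 b b' := by
  constructor
  · intro h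
    rw [sim1, ← Set.finite_image_iff
      ((inr_lex_injective (A := A) (B := B)).injOn)]
    refine h.subset ?_
    rintro z ⟨c, hc, rfl⟩
    rw [Set.mem_uIcc] at hc ⊢
    rcases hc with ⟨h1, h2⟩ | ⟨h1, h2⟩
    · exact Or.inl ⟨Sum.Lex.inr_le_inr_iff.mpr h1, Sum.Lex.inr_le_inr_iff.mpr h2⟩
    · exact Or.inr ⟨Sum.Lex.inr_le_inr_iff.mpr h1, Sum.Lex.inr_le_inr_iff.mpr h2⟩
  · intro h
    refine (h.image (fun c => (toLex (Sum.inr c) : A ⊕ₗ B))).subset ?_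
    intro z hz
    obtain (c | d) := z
    · change (toLex (Sum.inl c) : A ⊕ₗ B) ∈ _ at hz
      rw [Set.mem_uIcc] at hz
      rcases hz with ⟨h1, h2⟩ | ⟨h1, h2⟩
      · exact absurd h1 Sum.Lex.not_inr_le_inl
      · exact absurd h1 Sum.Lex.not_inr_le_inl
    · refine ⟨d, ?_, rfl⟩
      change (toLex (Sum.inr d) : A ⊕ₗ B) ∈ _ at hz
      rw [Set.mem_uIcc] at hz ⊢
      rcases hz with ⟨h1, h2⟩ | ⟨h1, h2⟩
      · exact Or.inl ⟨Sum.Lex.inr_le_inr_iff.mp h1, Sum.Lex.inr_le_inr_iff.mp h2⟩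
      · exact Or.inr ⟨Sum.Lex.inr_le_inr_iff.mp h1, Sum.Lex.inr_le_inr_iff.mp h2⟩

theorem sim1_inl_inr_iff {a : A} {b : B} :
    sim1 (toLex (Sum.inl a) : A ⊕ₗ B) (toLex (Sum.inr b)) ↔
      (Set.Ici a).Finite ∧ (Set.Iic b).Finite := by
  rw [sim1]
  constructor
  · intro h
    constructor
    · rw [← Set.finite_image_iff ((inl_lex_injective (A := A) (B := B)).injOn)]
      refine h.subset ?_
      rintro z ⟨c, hc, rfl⟩
      exact Set.mem_uIcc.mpr
        (Or.inl ⟨Sum.Lex.inl_le_inl_iff.mpr hc, Sum.Lex.inl_le_inr c b⟩)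
    · rw [← Set.finite_image_iff ((inr_lex_injective (A := A) (B := B)).injOn)]
      refine h.subset ?_
      rintro z ⟨c, hc, rfl⟩
      exact Set.mem_uIcc.mpr
        (Or.inl ⟨Sum.Lex.inl_le_inr a c, Sum.Lex.inr_le_inr_iff.mpr hc⟩)
  · rintro ⟨h1, h2⟩
    refine ((h1.image (fun c => (toLex (Sum.inl c) : A ⊕ₗ B))).union
      (h2.image (fun c => (toLex (Sum.inr c) : A ⊕ₗ B)))).subset ?_
    intro z hz
    rw [Set.mem_uIcc] at hz
    obtain (c | d) := z
    · rcases hz with ⟨hz1, hz2⟩ | ⟨hz1, hz2⟩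
      · exact Or.inl ⟨c, Sum.Lex.inl_le_inl_iff.mp hz1, rfl⟩
      · exact absurd hz1 Sum.Lex.not_inr_le_inl
    · rcases hz with ⟨hz1, hz2⟩ | ⟨hz1, hz2⟩
      · exact Or.inr ⟨d, Sum.Lex.inr_le_inr_iff.mp hz2, rfl⟩
      · exact absurd hz2 Sum.Lex.not_inr_le_inl

end SumSim


section LexSim

variable {A : Type} [LinearOrder A]

theorem plex_injective (n : ℕ) : Function.Injective (fun a : A => (toLex (n, a) : ℕ ×ₗ A)) :=
  fun a a' h => congrArg Prod.snd (toLex.injective h)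

theorem plex_le_iff {n m : ℕ} {a b : A} :
    (toLex (n, a) : ℕ ×ₗ A) ≤ toLex (m, b) ↔ n < m ∨ (n = m ∧ a ≤ b) :=
  Prod.Lex.le_iff (x := toLex (n, a)) (y := toLex (m, b))

theorem plex_lt_iff {n m : ℕ} {a b : A} :
    (toLex (n, a) : ℕ ×ₗ A) < toLex (m, b) ↔ n < m ∨ (n = m ∧ a < b) :=
  Prod.Lex.lt_iff (x := toLex (n, a)) (y := toLex (m, b))

theorem sim1_plex_same {n : ℕ} {a a' : A} :
    sim1 (toLex (n, a) : ℕ ×ₗ A) (toLex (n, a')) ↔ sim1 a a' := by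
  constructor
  · intro h
    rw [sim1, ← Set.finite_image_iff ((plex_injective (A := A) n).injOn)]
    refine h.subset ?_
    rintro z ⟨c, hc, rfl⟩
    rw [Set.mem_uIcc] at hc ⊢
    rcases hc with ⟨h1, h2⟩ | ⟨h1, h2⟩
    · exact Or.inl ⟨plex_le_iff.mpr (Or.inr ⟨rfl, h1⟩), plex_le_iff.mpr (Or.inr ⟨rfl, h2⟩)⟩
    · exact Or.inr ⟨plex_le_iff.mpr (Or.inr ⟨rfl, h1⟩), plex_le_iff.mpr (Or.inr ⟨rfl, h2⟩)⟩
  · intro h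
    refine (h.image (fun c => (toLex (n, c) : ℕ ×ₗ A))).subset ?_
    intro z hz
    obtain ⟨m, u⟩ := z
    change (toLex (m, u) : ℕ ×ₗ A) ∈ _ at hz
    rw [Set.mem_uIcc] at hz
    have hz' : (n < m ∨ (n = m ∧ a ≤ u)) ∧ (m < n ∨ (m = n ∧ u ≤ a')) ∨
        (n < m ∨ (n = m ∧ a' ≤ u)) ∧ (m < n ∨ (m = n ∧ u ≤ a)) := by
      rcases hz with ⟨h1, h2⟩ | ⟨h1, h2⟩
      · exact Or.inl ⟨plex_le_iff.mp h1, plex_le_iff.mp h2⟩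
      · exact Or.inr ⟨plex_le_iff.mp h1, plex_le_iff.mp h2⟩
    have hm : m = n := by rcases hz' with ⟨h1, h2⟩ | ⟨h1, h2⟩ <;> omega
    subst hm
    refine ⟨u, ?_, rfl⟩
    rw [Set.mem_uIcc]
    rcases hz' with ⟨h1, h2⟩ | ⟨h1, h2⟩
    · exact Or.inl ⟨(h1.resolve_left (lt_irrefl _)).2, (h2.resolve_left (lt_irrefl _)).2⟩
    · exact Or.inr ⟨(h1.resolve_left (lt_irrefl _)).2, (h2.resolve_left (lt_irrefl _)).2⟩

theorem sim1_plex_lt {n m : ℕ} (h : n < m) {a b : A}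
    (hs : sim1 (toLex (n, a) : ℕ ×ₗ A) (toLex (m, b))) :
    (Set.Ici a).Finite ∧ (Set.Iic b).Finite := by
  constructor
  · rw [← Set.finite_image_iff ((plex_injective (A := A) n).injOn)]
    refine hs.subset ?_
    rintro z ⟨c, hc, rfl⟩
    exact Set.mem_uIcc.mpr (Or.inl ⟨plex_le_iff.mpr (Or.inr ⟨rfl, hc⟩),
      plex_le_iff.mpr (Or.inl h)⟩)
  · rw [← Set.finite_image_iff ((plex_injective (A := A) m).injOn)]
    refine hs.subset ?_
    rintro z ⟨c, hc, rfl⟩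
    exact Set.mem_uIcc.mpr (Or.inl ⟨plex_le_iff.mpr (Or.inl h),
      plex_le_iff.mpr (Or.inr ⟨rfl, hc⟩)⟩)

theorem sim1_plex_succ {n : ℕ} {a b : A} (ha : (Set.Ici a).Finite) (hb : (Set.Iic b).Finite) :
    sim1 (toLex (n, a) : ℕ ×ₗ A) (toLex (n + 1, b)) := by
  refine ((ha.image (fun c => (toLex (n, c) : ℕ ×ₗ A))).union
    (hb.image (fun c => (toLex (n + 1, c) : ℕ ×ₗ A)))).subset ?_
  intro z hz
  obtain ⟨k, u⟩ := z
  change (toLex (k, u) : ℕ ×ₗ A) ∈ _ at hz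
  rw [Set.mem_uIcc] at hz
  have hz' : (n < k ∨ (n = k ∧ a ≤ u)) ∧ (k < n + 1 ∨ (k = n + 1 ∧ u ≤ b)) ∨
      (n + 1 < k ∨ (n + 1 = k ∧ b ≤ u)) ∧ (k < n ∨ (k = n ∧ u ≤ a)) := by
    rcases hz with ⟨h1, h2⟩ | ⟨h1, h2⟩
    · exact Or.inl ⟨plex_le_iff.mp h1, plex_le_iff.mp h2⟩
    · exact Or.inr ⟨plex_le_iff.mp h1, plex_le_iff.mp h2⟩
  rcases hz' with ⟨h1, h2⟩ | ⟨h1, h2⟩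
  · rcases h2 with h2 | ⟨h2, h2b⟩
    · have hk : k = n := by rcases h1 with h1 | ⟨h1, _⟩ <;> omega
      subst hk
      have hau : a ≤ u := (h1.resolve_left (lt_irrefl _)).2
      exact Or.inl ⟨u, hau, rfl⟩
    · subst h2
      exact Or.inr ⟨u, h2b, rfl⟩
  · exfalso; omega

theorem plex_fst_le_of_le {p q : ℕ ×ₗ A} (h : p ≤ q) : (ofLex p).1 ≤ (ofLex q).1 := by
  obtain ⟨n, a⟩ := p
  obtain ⟨m, b⟩ := q
  have := plex_le_iff.mp (h : (toLex (n, a) : ℕ ×ₗ A) ≤ toLex (m, b))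
  show n ≤ m
  omega

theorem sim1_plex_of_finite [Finite A] (x y : ℕ ×ₗ A) : sim1 x y := by
  set K := max (ofLex x).1 (ofLex y).1 with hK
  have hfin : ({z : ℕ ×ₗ A | (ofLex z).1 ≤ K}).Finite := by
    refine (((Set.finite_Iic K).prod (Set.finite_univ (α := A))).image
      (fun p => (toLex p : ℕ ×ₗ A))).subset ?_
    intro z hz
    exact ⟨ofLex z, ⟨hz, Set.mem_univ _⟩, rfl⟩
  refine hfin.subset ?_
  intro z hz
  rw [Set.mem_uIcc] at hz
  rcases hz with ⟨_, h2⟩ | ⟨_, h2⟩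
  · exact le_trans (plex_fst_le_of_le h2) (le_max_right _ _)
  · exact le_trans (plex_fst_le_of_le h2) (le_max_left _ _)

end LexSim


section Subtypes

open OrderDual

theorem finLex_FP {A : Type} [LinearOrder A] (hA : IsFP A) : ∀ n : ℕ, IsFP (Fin n ×ₗ A) := by
  intro n
  induction n with
  | zero =>
    haveI : IsEmpty (Fin 0 ×ₗ A) := ⟨fun p => Fin.elim0 (ofLex p).1⟩
    exact isFP_of_isEmpty _
  | succ n ih =>
    refine IsFP.ofIso (?_ : A ⊕ₗ (Fin n ×ₗ A) ≃o Fin (n + 1) ×ₗ A) (IsFP.sum hA ih)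
    refine StrictMono.orderIsoOfSurjective
      (fun z => Sum.elim (fun a => (toLex ((0 : Fin (n + 1)), a) : Fin (n + 1) ×ₗ A))
        (fun p => toLex ((ofLex p).1.succ, (ofLex p).2)) (ofLex z)) ?_ ?_
    · intro z z' h
      obtain (a | p) := z <;> obtain (a' | p') := z'
      · have h' : a < a' := Sum.Lex.inl_lt_inl_iff.mp h
        exact Prod.Lex.lt_iff.mpr (Or.inr ⟨rfl, h'⟩)
      · obtain ⟨k, u⟩ := p'
        exact (Prod.Lex.lt_iff (x := toLex ((0 : Fin (n + 1)), a)) (y := toLex (k.succ, u))).mpr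
          (Or.inl k.succ_pos)
      · exact absurd h Sum.Lex.not_inr_lt_inl
      · have h' : p < p' := Sum.Lex.inr_lt_inr_iff.mp h
        obtain ⟨k, u⟩ := p
        obtain ⟨k', u'⟩ := p'
        rcases (Prod.Lex.lt_iff (x := toLex (k, u)) (y := toLex (k', u'))).mp h' with hk | ⟨hk, hu⟩
        · exact (Prod.Lex.lt_iff (x := toLex (k.succ, u)) (y := toLex (k'.succ, u'))).mpr
            (Or.inl (Fin.succ_lt_succ_iff.mpr hk))
        · exact (Prod.Lex.lt_iff (x := toLex (k.succ, u)) (y := toLex (k'.succ, u'))).mpr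
            (Or.inr ⟨congrArg Fin.succ hk, hu⟩)
    · intro z
      obtain ⟨k, u⟩ := z
      refine Fin.cases ?_ ?_ k
      · exact ⟨toLex (Sum.inl u), rfl⟩
      · intro j
        exact ⟨toLex (Sum.inr (toLex (j, u))), rfl⟩

theorem gt_FP {A : Type} [LinearOrder A] (hA : IsFP A) : ∀ x : A, IsFP {y : A // x < y} := by
  induction hA with
  | zero => exact fun x => Fin.elim0 x
  | one =>
    intro x
    haveI : IsEmpty {y : Fin 1 // x < y} :=
      ⟨fun y => lt_irrefl x (by have := y.2; rwa [Subsingleton.elim y.1 x] at this)⟩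
    exact isFP_of_isEmpty _
  | @iso A B _ _ hA hne ih =>
    intro x
    obtain ⟨e⟩ := hne
    refine IsFP.ofIso (?_ : {y : A // e.symm x < y} ≃o {y : B // x < y}) (ih (e.symm x))
    refine StrictMono.orderIsoOfSurjective
      (fun y => ⟨e y.1, by have := e.strictMono y.2; rwa [e.apply_symm_apply] at this⟩) ?_ ?_
    · intro y y' h
      exact Subtype.mk_lt_mk.mpr (e.strictMono (Subtype.mk_lt_mk.mp h))
    · intro z
      refine ⟨⟨e.symm z.1, e.symm.strictMono z.2⟩, ?_⟩
      exact Subtype.ext (e.apply_symm_apply z.1)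
  | @sum A B _ _ hA hB ihA ihB =>
    intro x
    obtain (a | b) := x
    · refine IsFP.ofIso
        (?_ : {y : A // a < y} ⊕ₗ B ≃o {y : A ⊕ₗ B // toLex (Sum.inl a) < y})
        (IsFP.sum (ihA a) hB)
      refine StrictMono.orderIsoOfSurjective
        (fun z => Sum.elim
          (fun c => (⟨toLex (Sum.inl c.1), Sum.Lex.inl_lt_inl_iff.mpr c.2⟩ :
            {y : A ⊕ₗ B // toLex (Sum.inl a) < y}))
          (fun b => ⟨toLex (Sum.inr b), Sum.Lex.inl_lt_inr a b⟩) (ofLex z)) ?_ ?_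
      · intro z z' h
        obtain (c | d) := z <;> obtain (c' | d') := z'
        · exact Subtype.mk_lt_mk.mpr
            (Sum.Lex.inl_lt_inl_iff.mpr (Subtype.mk_lt_mk.mp (Sum.Lex.inl_lt_inl_iff.mp h)))
        · exact Subtype.mk_lt_mk.mpr (Sum.Lex.inl_lt_inr _ _)
        · exact absurd h Sum.Lex.not_inr_lt_inl
        · exact Subtype.mk_lt_mk.mpr
            (Sum.Lex.inr_lt_inr_iff.mpr (Sum.Lex.inr_lt_inr_iff.mp h))
      · rintro ⟨y, hy⟩
        obtain (c | d) := y
        · exact ⟨toLex (Sum.inl ⟨c, Sum.Lex.inl_lt_inl_iff.mp hy⟩), Subtype.ext rfl⟩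
        · exact ⟨toLex (Sum.inr d), Subtype.ext rfl⟩
    · refine IsFP.ofIso
        (?_ : {y : B // b < y} ≃o {y : A ⊕ₗ B // toLex (Sum.inr b) < y}) (ihB b)
      refine StrictMono.orderIsoOfSurjective
        (fun c => ⟨toLex (Sum.inr c.1), Sum.Lex.inr_lt_inr_iff.mpr c.2⟩) ?_ ?_
      · intro c c' h
        exact Subtype.mk_lt_mk.mpr (Sum.Lex.inr_lt_inr_iff.mpr (Subtype.mk_lt_mk.mp h))
      · rintro ⟨y, hy⟩
        obtain (c | d) := y
        · exact absurd hy Sum.Lex.not_inr_lt_inl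
        · exact ⟨⟨d, Sum.Lex.inr_lt_inr_iff.mp hy⟩, Subtype.ext rfl⟩
  | @omega A _ hA ih =>
    intro x
    obtain ⟨n, a⟩ := x
    refine IsFP.ofIso
      (?_ : {c : A // a < c} ⊕ₗ (ℕ ×ₗ A) ≃o {y : ℕ ×ₗ A // toLex (n, a) < y})
      (IsFP.sum (ih a) (IsFP.omega hA))
    refine StrictMono.orderIsoOfSurjective
      (fun z => Sum.elim
        (fun c => (⟨toLex (n, c.1), plex_lt_iff.mpr (Or.inr ⟨rfl, c.2⟩)⟩ :
          {y : ℕ ×ₗ A // toLex (n, a) < y}))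
        (fun p => ⟨toLex (n + 1 + (ofLex p).1, (ofLex p).2),
          plex_lt_iff.mpr (Or.inl (by omega))⟩) (ofLex z)) ?_ ?_
    · intro z z' h
      obtain (c | p) := z <;> obtain (c' | p') := z'
      · exact Subtype.mk_lt_mk.mpr
          (plex_lt_iff.mpr (Or.inr ⟨rfl, Subtype.mk_lt_mk.mp (Sum.Lex.inl_lt_inl_iff.mp h)⟩))
      · obtain ⟨m, u⟩ := p'
        exact Subtype.mk_lt_mk.mpr (plex_lt_iff.mpr (Or.inl (by omega)))
      · exact absurd h Sum.Lex.not_inr_lt_inl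
      · have h' := Sum.Lex.inr_lt_inr_iff.mp h
        obtain ⟨m, u⟩ := p
        obtain ⟨m', u'⟩ := p'
        rcases plex_lt_iff.mp h' with hm | ⟨hm, hu⟩
        · have hm2 : m < m' := hm
          exact Subtype.mk_lt_mk.mpr (plex_lt_iff.mpr
            (Or.inl (by show n + 1 + m < n + 1 + m'; omega)))
        · have hm2 : m = m' := hm
          exact Subtype.mk_lt_mk.mpr (plex_lt_iff.mpr
            (Or.inr ⟨by show n + 1 + m = n + 1 + m'; omega, hu⟩))
    · rintro ⟨y, hy⟩
      obtain ⟨m, u⟩ := y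
      rcases plex_lt_iff.mp hy with hm | ⟨rfl, hau⟩
      · refine ⟨toLex (Sum.inr (toLex (m - n - 1, u))), ?_⟩
        refine Subtype.ext ?_
        show (toLex (n + 1 + (m - n - 1), u) : ℕ ×ₗ A) = toLex (m, u)
        have hmn : n + 1 + (m - n - 1) = m := by omega
        rw [hmn]
      · exact ⟨toLex (Sum.inl ⟨u, hau⟩), Subtype.ext rfl⟩
  | @omegaStar A _ hA ih =>
    intro x
    obtain ⟨n, a⟩ := x
    refine IsFP.ofIso
      (?_ : {c : A // a < c} ⊕ₗ (Fin (ofDual n) ×ₗ A) ≃o {y : ℕᵒᵈ ×ₗ A // toLex (n, a) < y})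
      (IsFP.sum (ih a) (finLex_FP hA (ofDual n)))
    refine StrictMono.orderIsoOfSurjective
      (fun z => Sum.elim
        (fun c => (⟨toLex (n, c.1), (Prod.Lex.lt_iff (x := toLex (n, a)) (y := toLex (n, c.1))).mpr (Or.inr ⟨rfl, c.2⟩)⟩ :
          {y : ℕᵒᵈ ×ₗ A // toLex (n, a) < y}))
        (fun p => ⟨toLex (toDual (ofDual n - 1 - ((ofLex p).1 : ℕ)), (ofLex p).2),
          (Prod.Lex.lt_iff (x := toLex (n, a)) ).mpr (Or.inl (by
            have hk := (ofLex p).1.isLt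
            show toDual (ofDual n) < toDual (ofDual n - 1 - ((ofLex p).1 : ℕ))
            exact toDual_lt_toDual.mpr (by omega)))⟩) (ofLex z)) ?_ ?_
    · intro z z' h
      obtain (c | p) := z <;> obtain (c' | p') := z'
      · exact Subtype.mk_lt_mk.mpr
          (Prod.Lex.lt_iff.mpr
            (Or.inr ⟨rfl, Subtype.mk_lt_mk.mp (Sum.Lex.inl_lt_inl_iff.mp h)⟩))
      · obtain ⟨k, u⟩ := p'
        have hk := k.isLt
        refine Subtype.mk_lt_mk.mpr (Prod.Lex.lt_iff.mpr (Or.inl ?_))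
        show toDual (ofDual n) < toDual (ofDual n - 1 - (k : ℕ))
        exact toDual_lt_toDual.mpr (by omega)
      · exact absurd h Sum.Lex.not_inr_lt_inl
      · have h' := Sum.Lex.inr_lt_inr_iff.mp h
        obtain ⟨k, u⟩ := p
        obtain ⟨k', u'⟩ := p'
        have hk := k.isLt
        have hk' := k'.isLt
        rcases (Prod.Lex.lt_iff (x := toLex (k, u)) (y := toLex (k', u'))).mp h' with hm | ⟨hm, hu⟩
        · have hm' : (k : ℕ) < (k' : ℕ) := hm
          refine Subtype.mk_lt_mk.mpr (Prod.Lex.lt_iff.mpr (Or.inl ?_))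
          show toDual (ofDual n - 1 - (k : ℕ)) < toDual (ofDual n - 1 - (k' : ℕ))
          exact toDual_lt_toDual.mpr (by omega)
        · refine Subtype.mk_lt_mk.mpr (Prod.Lex.lt_iff.mpr (Or.inr ⟨?_, hu⟩))
          have hm2 : (k : ℕ) = (k' : ℕ) := congrArg Fin.val hm
          show toDual (ofDual n - 1 - (k : ℕ)) = toDual (ofDual n - 1 - (k' : ℕ))
          rw [hm2]
    · rintro ⟨y, hy⟩
      obtain ⟨m, u⟩ := y
      rcases (Prod.Lex.lt_iff (x := toLex (n, a)) (y := toLex (m, u))).mp hy with hm | ⟨rfl, hau⟩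
      · have hm' : (ofDual m : ℕ) < ofDual n := hm
        refine ⟨toLex (Sum.inr (toLex ((⟨ofDual n - 1 - ofDual m, by omega⟩ : Fin (ofDual n)), u))), ?_⟩
        refine Subtype.ext ?_
        show (toLex (toDual (ofDual n - 1 - (ofDual n - 1 - ofDual m)), u) : ℕᵒᵈ ×ₗ A) =
          toLex (m, u)
        have h2 : ofDual n - 1 - (ofDual n - 1 - ofDual m) = ofDual m := by omega
        rw [h2]
        rfl
      · exact ⟨toLex (Sum.inl ⟨u, hau⟩), Subtype.ext rfl⟩

theorem lt_FP {A : Type} [LinearOrder A] (hA : IsFP A) (x : A) : IsFP {y : A // y < x} := by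
  have h1 : IsFP {z : Aᵒᵈ // toDual x < z} := gt_FP (dual_FP hA) (toDual x)
  have h2 : IsFP ({z : Aᵒᵈ // toDual x < z}ᵒᵈ) := dual_FP h1
  refine IsFP.ofIso (?_ : {z : Aᵒᵈ // toDual x < z}ᵒᵈ ≃o {y : A // y < x}) h2
  refine StrictMono.orderIsoOfSurjective
    (fun z => ⟨ofDual (ofDual z).1, (ofDual z).2⟩) ?_ ?_
  · intro z z' h
    have h' : ofDual z' < ofDual z := h
    have h'' : (ofDual z').1 < (ofDual z).1 := Subtype.coe_lt_coe.mpr h'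
    exact Subtype.mk_lt_mk.mpr h''
  · intro y
    exact ⟨toDual ⟨toDual y.1, toDual_lt_toDual.mpr y.2⟩, Subtype.ext rfl⟩

end Subtypes


section MainLemmas

open OrderDual

theorem sum_deriv {A B : Type} [LinearOrder A] [LinearOrder B] (hDA : IsFP (HDeriv A))
    (hDB : IsFP (HDeriv B)) : IsFP (HDeriv (A ⊕ₗ B)) := by
  rcases isEmpty_or_nonempty A with hEA | hNA
  · have e : B ≃o A ⊕ₗ B := by
      refine StrictMono.orderIsoOfSurjective (fun b => toLex (Sum.inr b)) ?_ ?_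
      · intro b b' h
        exact Sum.Lex.inr_lt_inr_iff.mpr h
      · intro z
        obtain (a | b) := z
        · exact isEmptyElim a
        · exact ⟨b, rfl⟩
    exact IsFP.ofIso (hderivCongr e) hDB
  rcases isEmpty_or_nonempty B with hEB | hNB
  · have e : A ≃o A ⊕ₗ B := by
      refine StrictMono.orderIsoOfSurjective (fun a => toLex (Sum.inl a)) ?_ ?_
      · intro a a' h
        exact Sum.Lex.inl_lt_inl_iff.mpr h
      · intro z
        obtain (a | b) := z
        · exact ⟨a, rfl⟩
        · exact isEmptyElim b
    exact IsFP.ofIso (hderivCongr e) hDA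
  by_cases hM : (∃ a : A, (Set.Ici a).Finite) ∧ (∃ b : B, (Set.Iic b).Finite)
  · obtain ⟨⟨a0, ha0⟩, ⟨b0, hb0⟩⟩ := hM
    have hb0lt : ∀ y : B, ¬ sim1 y b0 → cls b0 < cls y := by
      intro y hy
      rcases lt_trichotomy (cls b0) (cls y) with h | h | h
      · exact h
      · exact absurd (sim1_symm (cls_eq_cls.mp h)) hy
      · exfalso
        obtain ⟨hlt, _⟩ := cls_lt_cls.mp h
        exact hy (sim1_of_Iic_finite (hb0.subset (Set.Iic_subset_Iic.mpr hlt.le)) hb0)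
    refine IsFP.ofIso (?_ : HDeriv A ⊕ₗ {d : HDeriv B // cls b0 < d} ≃o HDeriv (A ⊕ₗ B))
      (IsFP.sum hDA (gt_FP hDB (cls b0)))
    refine StrictMono.orderIsoOfSurjective (fun z => Sum.elim
      (fun c => cls (toLex (Sum.inl c.out) : A ⊕ₗ B))
      (fun d => cls (toLex (Sum.inr d.1.out))) (ofLex z)) ?_ ?_
    · intro z z' h
      obtain (c | d) := z <;> obtain (c' | d') := z'
      · have h' := Sum.Lex.inl_lt_inl_iff.mp h
        rw [← cls_out c, ← cls_out c', cls_lt_cls] at h'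
        exact cls_lt_cls.mpr ⟨Sum.Lex.inl_lt_inl_iff.mpr h'.1,
          fun hs => h'.2 (sim1_inl_iff.mp hs)⟩
      · refine cls_lt_cls.mpr ⟨Sum.Lex.inl_lt_inr _ _, fun hs => ?_⟩
        obtain ⟨hIci, hIic⟩ := sim1_inl_inr_iff.mp hs
        have h1 : sim1 d'.1.out b0 := sim1_of_Iic_finite hIic hb0
        have h2 : cls b0 = d'.1 := by
          rw [← cls_out d'.1]
          exact cls_eq_cls.mpr (sim1_symm h1)
        exact (ne_of_lt d'.2) h2
      · exact absurd h Sum.Lex.not_inr_lt_inl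
      · have h' : d.1 < d'.1 := Subtype.mk_lt_mk.mp (Sum.Lex.inr_lt_inr_iff.mp h)
        rw [← cls_out d.1, ← cls_out d'.1, cls_lt_cls] at h'
        exact cls_lt_cls.mpr ⟨Sum.Lex.inr_lt_inr_iff.mpr h'.1,
          fun hs => h'.2 (sim1_inr_iff.mp hs)⟩
    · intro c
      obtain ⟨y, rfl⟩ := cls_surjective c
      obtain (a | b) := y
      · exact ⟨toLex (Sum.inl (cls a)),
          cls_eq_cls.mpr (sim1_inl_iff.mpr (sim1_out_of_cls rfl))⟩
      · by_cases hsb : sim1 b b0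
        · refine ⟨toLex (Sum.inl (cls a0)), ?_⟩
          refine cls_eq_cls.mpr (sim1_inl_inr_iff.mpr ⟨?_, ?_⟩)
          · exact Ici_finite_of_sim1 ha0 (sim1_out_of_cls rfl)
          · exact Iic_finite_of_sim1 hb0 hsb
        · refine ⟨toLex (Sum.inr ⟨cls b, hb0lt b hsb⟩), ?_⟩
          exact cls_eq_cls.mpr (sim1_inr_iff.mpr (sim1_out_of_cls rfl))
  · refine IsFP.ofIso (?_ : HDeriv A ⊕ₗ HDeriv B ≃o HDeriv (A ⊕ₗ B)) (IsFP.sum hDA hDB)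
    refine StrictMono.orderIsoOfSurjective (fun z => Sum.elim
      (fun c => cls (toLex (Sum.inl c.out) : A ⊕ₗ B))
      (fun d => cls (toLex (Sum.inr d.out))) (ofLex z)) ?_ ?_
    · intro z z' h
      obtain (c | d) := z <;> obtain (c' | d') := z'
      · have h' := Sum.Lex.inl_lt_inl_iff.mp h
        rw [← cls_out c, ← cls_out c', cls_lt_cls] at h'
        exact cls_lt_cls.mpr ⟨Sum.Lex.inl_lt_inl_iff.mpr h'.1,
          fun hs => h'.2 (sim1_inl_iff.mp hs)⟩
      · refine cls_lt_cls.mpr ⟨Sum.Lex.inl_lt_inr _ _, fun hs => ?_⟩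
        obtain ⟨hIci, hIic⟩ := sim1_inl_inr_iff.mp hs
        exact hM ⟨⟨_, hIci⟩, ⟨_, hIic⟩⟩
      · exact absurd h Sum.Lex.not_inr_lt_inl
      · have h' := Sum.Lex.inr_lt_inr_iff.mp h
        rw [← cls_out d, ← cls_out d', cls_lt_cls] at h'
        exact cls_lt_cls.mpr ⟨Sum.Lex.inr_lt_inr_iff.mpr h'.1,
          fun hs => h'.2 (sim1_inr_iff.mp hs)⟩
    · intro c
      obtain ⟨y, rfl⟩ := cls_surjective c
      obtain (a | b) := y
      · exact ⟨toLex (Sum.inl (cls a)),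
          cls_eq_cls.mpr (sim1_inl_iff.mpr (sim1_out_of_cls rfl))⟩
      · exact ⟨toLex (Sum.inr (cls b)),
          cls_eq_cls.mpr (sim1_inr_iff.mpr (sim1_out_of_cls rfl))⟩

theorem omega_deriv {A : Type} [LinearOrder A] (hA : IsFP A) (hDA : IsFP (HDeriv A)) :
    IsFP (HDeriv (ℕ ×ₗ A)) := by
  rcases isEmpty_or_nonempty A with hEA | hNA
  · haveI : IsEmpty (ℕ ×ₗ A) := ⟨fun p => isEmptyElim (ofLex p).2⟩
    haveI : IsEmpty (HDeriv (ℕ ×ₗ A)) := ⟨fun c => isEmptyElim c.out⟩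
    exact isFP_of_isEmpty _
  by_cases hFin : Finite A
  · haveI := hFin
    haveI : Subsingleton (HDeriv (ℕ ×ₗ A)) := ⟨fun c c' => by
      obtain ⟨x, rfl⟩ := cls_surjective c
      obtain ⟨y, rfl⟩ := cls_surjective c'
      exact cls_eq_cls.mpr (sim1_plex_of_finite x y)⟩
    haveI : Nonempty (HDeriv (ℕ ×ₗ A)) := ⟨cls (toLex (0, Classical.arbitrary A))⟩
    exact isFP_of_subsingleton _
  by_cases hM : (∃ a : A, (Set.Ici a).Finite) ∧ (∃ b : A, (Set.Iic b).Finite)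
  · obtain ⟨⟨a0, ha0⟩, ⟨b0, hb0⟩⟩ := hM
    have hIci_of_sim : ∀ x : A, sim1 x a0 → (Set.Ici x).Finite :=
      fun x h => Ici_finite_of_sim1 ha0 h
    have hsim_of_Ici : ∀ x : A, (Set.Ici x).Finite → sim1 x a0 :=
      fun x h => sim1_of_Ici_finite h ha0
    have hb0a0 : ¬ sim1 b0 a0 := by
      intro hs
      apply hFin
      rw [← Set.finite_univ_iff]
      refine ((hb0.union hs).union ha0).subset ?_
      intro z _
      rcases le_total z b0 with h | h
      · exact Or.inl (Or.inl h)
      rcases le_total a0 z with h' | h'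
      · exact Or.inr h'
      · exact Or.inl (Or.inr (Set.mem_uIcc.mpr (Or.inl ⟨h, h'⟩)))
    have hlt_top : ∀ x : A, ¬ sim1 x a0 → cls x < cls a0 := by
      intro x hx
      rcases lt_trichotomy (cls x) (cls a0) with h | h | h
      · exact h
      · exact absurd (cls_eq_cls.mp h) hx
      · exfalso
        obtain ⟨hlt, _⟩ := cls_lt_cls.mp h
        exact hx (hsim_of_Ici x (ha0.subset (Set.Ici_subset_Ici.mpr hlt.le)))
    have hb0top : cls b0 < cls a0 := hlt_top b0 hb0a0
    refine IsFP.ofIso (?_ : ℕ ×ₗ {c : HDeriv A // c < cls a0} ≃o HDeriv (ℕ ×ₗ A))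
      (IsFP.omega (lt_FP hDA (cls a0)))
    refine StrictMono.orderIsoOfSurjective
      (fun p => cls (toLex ((ofLex p).1, (ofLex p).2.1.out))) ?_ ?_
    · intro p p' h
      obtain ⟨n, c⟩ := p
      obtain ⟨n', c'⟩ := p'
      rcases (Prod.Lex.lt_iff (x := toLex (n, c)) (y := toLex (n', c'))).mp h with hn | ⟨rfl, hc⟩
      · refine cls_lt_cls.mpr ⟨plex_lt_iff.mpr (Or.inl hn), fun hs => ?_⟩
        obtain ⟨hIci, _⟩ := sim1_plex_lt hn hs
        have h1 : cls (c.1.out) = cls a0 := cls_eq_cls.mpr (hsim_of_Ici _ hIci)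
        rw [cls_out] at h1
        exact (ne_of_lt c.2) h1
      · have hc' : c.1 < c'.1 := Subtype.mk_lt_mk.mp hc
        rw [← cls_out c.1, ← cls_out c'.1, cls_lt_cls] at hc'
        exact cls_lt_cls.mpr ⟨plex_lt_iff.mpr (Or.inr ⟨rfl, hc'.1⟩),
          fun hs => hc'.2 (sim1_plex_same.mp hs)⟩
    · intro c
      obtain ⟨y, rfl⟩ := cls_surjective c
      obtain ⟨n, x⟩ := y
      by_cases hx : sim1 x a0
      · refine ⟨toLex (n + 1, ⟨cls b0, hb0top⟩), ?_⟩
        have h1 : sim1 (toLex (n + 1, (cls b0).out) : ℕ ×ₗ A) (toLex (n + 1, b0)) :=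
          sim1_plex_same.mpr (sim1_out_of_cls rfl)
        have h2 : sim1 (toLex (n, x) : ℕ ×ₗ A) (toLex (n + 1, b0)) :=
          sim1_plex_succ (hIci_of_sim x hx) hb0
        exact cls_eq_cls.mpr (sim1_trans h1 (sim1_symm h2))
      · refine ⟨toLex (n, ⟨cls x, hlt_top x hx⟩), ?_⟩
        exact cls_eq_cls.mpr (sim1_plex_same.mpr (sim1_out_of_cls rfl))
  · refine IsFP.ofIso (?_ : ℕ ×ₗ HDeriv A ≃o HDeriv (ℕ ×ₗ A)) (IsFP.omega hDA)
    refine StrictMono.orderIsoOfSurjective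
      (fun p => cls (toLex ((ofLex p).1, (ofLex p).2.out))) ?_ ?_
    · intro p p' h
      obtain ⟨n, c⟩ := p
      obtain ⟨n', c'⟩ := p'
      rcases (Prod.Lex.lt_iff (x := toLex (n, c)) (y := toLex (n', c'))).mp h with hn | ⟨rfl, hc⟩
      · refine cls_lt_cls.mpr ⟨plex_lt_iff.mpr (Or.inl hn), fun hs => ?_⟩
        obtain ⟨h1, h2⟩ := sim1_plex_lt hn hs
        exact hM ⟨⟨_, h1⟩, ⟨_, h2⟩⟩
      · change c < c' at hc
        rw [← cls_out c, ← cls_out c', cls_lt_cls] at hc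
        exact cls_lt_cls.mpr ⟨plex_lt_iff.mpr (Or.inr ⟨rfl, hc.1⟩),
          fun hs => hc.2 (sim1_plex_same.mp hs)⟩
    · intro c
      obtain ⟨y, rfl⟩ := cls_surjective c
      obtain ⟨n, x⟩ := y
      exact ⟨toLex (n, cls x), cls_eq_cls.mpr (sim1_plex_same.mpr (sim1_out_of_cls rfl))⟩

end MainLemmas

/-- The first Hausdorff derivative of a finitely presented linear order is
finitely presented. -/
theorem stmt_15 (L : Type) [LinearOrder L] (h : IsFP L) : IsFP (HDeriv L) := by
  induction h with
  | zero =>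
    haveI : IsEmpty (HDeriv (Fin 0)) := ⟨fun c => Fin.elim0 c.out⟩
    exact isFP_of_isEmpty _
  | one =>
    haveI : Subsingleton (HDeriv (Fin 1)) := ⟨fun c c' => by
      obtain ⟨x, rfl⟩ := cls_surjective c
      obtain ⟨y, rfl⟩ := cls_surjective c'
      rw [Subsingleton.elim x y]⟩
    haveI : Nonempty (HDeriv (Fin 1)) := ⟨cls 0⟩
    exact isFP_of_subsingleton _
  | @iso A B _ _ hA hne ih =>
    obtain ⟨e⟩ := hne
    exact IsFP.ofIso (hderivCongr e) ih
  | @sum A B _ _ hA hB ihA ihB => exact sum_deriv ihA ihB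
  | @omega A _ hA ih => exact omega_deriv hA ih
  | @omegaStar A _ hA ih =>
    have hDdual : IsFP (HDeriv (Aᵒᵈ)) := IsFP.ofIso (hderivDual A).symm (dual_FP ih)
    have h2 : IsFP (HDeriv (ℕ ×ₗ Aᵒᵈ)) := omega_deriv (dual_FP hA) hDdual
    have h3 : IsFP ((HDeriv (ℕ ×ₗ Aᵒᵈ))ᵒᵈ) := dual_FP h2
    have e1 : ℕᵒᵈ ×ₗ A ≃o (ℕ ×ₗ Aᵒᵈ)ᵒᵈ :=
      ((prodLexDual ℕ (Aᵒᵈ)).trans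
        (@prodLexCongr ℕᵒᵈ ((Aᵒᵈ)ᵒᵈ) ℕᵒᵈ A _ (OrderDual.instLinearOrder (Aᵒᵈ)) _ _
          (OrderIso.refl ℕᵒᵈ) (OrderIso.dualDual A).symm)).symm
    exact IsFP.ofIso ((hderivCongr e1).trans (hderivDual (ℕ ×ₗ Aᵒᵈ))).symm h3
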